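/- Let X and Y be compact metric spaces, α a nonzero finite positive Radon measure on X, β a nonzero finite positive Radon measure on Y, and let φ₁, φ₂ be entropy functions. Let c : X×Y → ℝ be continuous with c(x,y) ≥ L for all (x,y) and some L ∈ ℝ. Then for every π ∈ M⁺(X×Y), ∫_{X×Y} c dπ + D_{φ₁}(π₁‖α) + D_{φ₂}(π₂‖β) ≥ L·m(π) + m(α)·φ₁(m(π)/m(α)) + m(β)·φ₂(m(π)/m(β)). In particular, if φ₁ and φ₂ are superlinear, the left-hand side tends to +∞ as m(π) → ∞, uniformly over such costs c bounded below by L. -/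

import Mathlib

open MeasureTheory Filter Set Pointwise
open Topology
open scoped ENNReal NNReal

noncomputable section

/-- The recession slope `φ'_∞ = lim_{x→∞} φ(x)/x` of an entropy function. -/
def phiRecession (φ : ℝ → ℝ≥0∞) : ℝ≥0∞ :=
  Filter.limsup (fun x : ℝ => φ x / ENNReal.ofReal x) Filter.atTop

/-- An entropy function: convex, lower semicontinuous `φ : [0,∞) → [0,∞]` with `φ(1) = 0`. -/
def IsEntropyFunction (φ : ℝ → ℝ≥0∞) : Prop :=
  φ 1 = 0 ∧ LowerSemicontinuous φ ∧
    ∀ x ∈ Set.Ici (0 : ℝ), ∀ y ∈ Set.Ici (0 : ℝ), ∀ t ∈ Set.Icc (0 : ℝ) 1,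
      φ (t * x + (1 - t) * y) ≤ ENNReal.ofReal t * φ x + ENNReal.ofReal (1 - t) * φ y

/-- The φ-divergence `D_φ(μ‖ν) = ∫ φ(dμ/dν) dν + φ'_∞ · μ^⊥(univ)`. -/
def phiDiv {Z : Type*} [MeasurableSpace Z] (φ : ℝ → ℝ≥0∞) (μ ν : Measure Z) : ℝ≥0∞ :=
  (∫⁻ z, φ ((μ.rnDeriv ν z).toReal) ∂ν) + phiRecession φ * μ.singularPart ν Set.univ

/-- The UOT objective `∫ c dπ + D_{φ₁}(π₁‖α) + D_{φ₂}(π₂‖β)` for a fixed cost `c`. -/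
def UOTobj {X Y : Type*} [MeasurableSpace X] [MeasurableSpace Y]
    (α : Measure X) (β : Measure Y) (φ₁ φ₂ : ℝ → ℝ≥0∞)
    (c : X × Y → ℝ) (π : Measure (X × Y)) : EReal :=
  ((∫ z, c z ∂π : ℝ) : EReal)
    + ((phiDiv φ₁ (π.map Prod.fst) α : ℝ≥0∞) : EReal)
    + ((phiDiv φ₂ (π.map Prod.snd) β : ℝ≥0∞) : EReal)

lemma entropy_separation {φ : ℝ → ℝ≥0∞} (hφ : IsEntropyFunction φ)
    {xb r : ℝ} (hxb : 0 ≤ xb) (hr : ENNReal.ofReal r < φ xb) :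
    ∃ a b u : ℝ, 0 ≤ b ∧ a * xb + b * r < u ∧
      ∀ x t : ℝ, 0 ≤ x → 0 ≤ t → φ x ≤ ENNReal.ofReal t → u < a * x + b * t := by
  obtain ⟨hφ1, hlsc, hconv⟩ := hφ
  set epi : Set (ℝ × ℝ) := {p | 0 ≤ p.1 ∧ 0 ≤ p.2 ∧ φ p.1 ≤ ENNReal.ofReal p.2} with hepi
  have hconvex : Convex ℝ epi := by
    rintro ⟨x₁, t₁⟩ ⟨hx₁, ht₁, h1⟩ ⟨x₂, t₂⟩ ⟨hx₂, ht₂, h2⟩ s₁ s₂ hs₁ hs₂ hsum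
    have h1s : (1 : ℝ) - s₁ = s₂ := by linarith
    refine ⟨?_, ?_, ?_⟩
    · show 0 ≤ s₁ * x₁ + s₂ * x₂; positivity
    · show 0 ≤ s₁ * t₁ + s₂ * t₂; positivity
    · show φ (s₁ * x₁ + s₂ * x₂) ≤ ENNReal.ofReal (s₁ * t₁ + s₂ * t₂)
      have hc := hconv x₁ (mem_Ici.mpr hx₁) x₂ (mem_Ici.mpr hx₂) s₁ ⟨hs₁, by linarith⟩
      rw [h1s] at hc
      refine hc.trans ?_
      have hle : ENNReal.ofReal s₁ * φ x₁ + ENNReal.ofReal s₂ * φ x₂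
          ≤ ENNReal.ofReal s₁ * ENNReal.ofReal t₁ + ENNReal.ofReal s₂ * ENNReal.ofReal t₂ :=
        add_le_add (mul_le_mul_right h1 _) (mul_le_mul_right h2 _)
      refine hle.trans_eq ?_
      rw [← ENNReal.ofReal_mul hs₁, ← ENNReal.ofReal_mul hs₂,
        ← ENNReal.ofReal_add (by positivity) (by positivity)]
  have hclosed : IsClosed epi := by
    rw [← isOpen_compl_iff, isOpen_iff_mem_nhds]
    rintro ⟨x, t⟩ hp
    simp only [hepi, mem_compl_iff, mem_setOf_eq, not_and, not_le] at hp
    by_cases hx : 0 ≤ x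
    · by_cases ht : 0 ≤ t
      · have hlt : ENNReal.ofReal t < φ x := hp hx ht
        obtain ⟨r', hr'1, hr'2⟩ : ∃ r' : ℝ, t < r' ∧ ENNReal.ofReal r' < φ x := by
          rcases eq_or_ne (φ x) ⊤ with h | h
          · exact ⟨t + 1, by linarith, by simp [h]⟩
          · have htlt : t < (φ x).toReal := by
              rwa [← ENNReal.ofReal_lt_iff_lt_toReal ht h]
            refine ⟨(t + (φ x).toReal) / 2, by linarith, ?_⟩
            rw [ENNReal.ofReal_lt_iff_lt_toReal (by positivity) h]
            linarith
        have h1 : ∀ᶠ x' in 𝓝 x, ENNReal.ofReal r' < φ x' := hlsc x _ hr'2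
        have h2 : ∀ᶠ t' in 𝓝 t, t' < r' := eventually_lt_nhds hr'1
        have hev := h1.prod_mk h2
        rw [← nhds_prod_eq] at hev
        refine Filter.mem_of_superset hev ?_
        rintro ⟨x', t'⟩ ⟨h1', h2'⟩
        simp only [mem_compl_iff, hepi, mem_setOf_eq, not_and, not_le]
        intro _ _
        exact lt_of_le_of_lt (ENNReal.ofReal_le_ofReal h2'.le) h1'
      · have hopen : IsOpen {q : ℝ × ℝ | q.2 < 0} := isOpen_lt continuous_snd continuous_const
        refine Filter.mem_of_superset (hopen.mem_nhds (by simpa using lt_of_not_ge ht)) ?_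
        intro q hq
        simp only [mem_compl_iff, hepi, mem_setOf_eq, not_and, not_le]
        intro _ h2; exact absurd hq (not_lt.mpr h2)
    · have hopen : IsOpen {q : ℝ × ℝ | q.1 < 0} := isOpen_lt continuous_fst continuous_const
      refine Filter.mem_of_superset (hopen.mem_nhds (by simpa using lt_of_not_ge hx)) ?_
      intro q hq
      simp only [mem_compl_iff, hepi, mem_setOf_eq, not_and, not_le]
      intro h; exact absurd hq (not_lt.mpr h)
  have hpt : ((xb, r) : ℝ × ℝ) ∉ epi := by
    rintro ⟨-, -, h3⟩
    exact absurd hr (not_lt.mpr h3)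
  obtain ⟨f, u, hfu, hsep⟩ := geometric_hahn_banach_point_closed hconvex hclosed hpt
  set a := f (1, 0) with ha
  set b := f (0, 1) with hb
  have hf : ∀ p : ℝ × ℝ, f p = a * p.1 + b * p.2 := by
    intro p
    have hp : p = p.1 • ((1 : ℝ), (0 : ℝ)) + p.2 • ((0 : ℝ), (1 : ℝ)) := by
      simp [Prod.ext_iff]
    calc f p = f (p.1 • ((1 : ℝ), (0 : ℝ)) + p.2 • ((0 : ℝ), (1 : ℝ))) := by rw [← hp]
      _ = a * p.1 + b * p.2 := by
          rw [f.map_add, f.map_smul, f.map_smul, smul_eq_mul, smul_eq_mul]; ring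
  have hb0 : 0 ≤ b := by
    by_contra hb'
    push_neg at hb'
    have hmem : ∀ t : ℝ, 0 ≤ t → ((1 : ℝ), t) ∈ epi := by
      intro t ht
      exact ⟨zero_le_one, ht, by simp [hφ1]⟩
    have h0 : u < a := by
      have := hsep _ (hmem 0 le_rfl)
      rw [hf] at this; simpa using this
    set t₀ := (u - a - 1) / b with ht₀
    have ht₀pos : 0 < t₀ := div_pos_of_neg_of_neg (by linarith) hb'
    have hcon := hsep _ (hmem t₀ ht₀pos.le)
    rw [hf] at hcon
    simp only [ht₀] at hcon
    rw [mul_div_cancel₀ _ (ne_of_lt hb')] at hcon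
    linarith
  refine ⟨a, b, u, hb0, ?_, ?_⟩
  · have := hfu
    rw [hf] at this; simpa using this
  · intro x t hx ht hxt
    have := hsep (x, t) ⟨hx, ht, hxt⟩
    rw [hf] at this; simpa using this

lemma entropy_recession_bound {φ : ℝ → ℝ≥0∞} (hφ : IsEntropyFunction φ)
    {a s : ℝ} (ha : 0 ≤ a) (hs : 0 ≤ s) :
    φ (a + s) ≤ φ a + phiRecession φ * ENNReal.ofReal s := by
  obtain ⟨hφ1, hlsc, hconv⟩ := hφ
  rcases hs.eq_or_lt with rfl | hs'
  · simp
  have hos0 : ENNReal.ofReal s ≠ 0 := by simp [hs']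
  have hosT : ENNReal.ofReal s ≠ ∞ := ENNReal.ofReal_ne_top
  rcases eq_or_ne (φ a) ⊤ with hfa | hfa
  · simp [hfa]
  rcases eq_or_ne (phiRecession φ) ⊤ with hrec | hrec
  · rw [hrec, ENNReal.top_mul hos0]
    simp
  apply ENNReal.le_of_forall_pos_le_add
  intro ε hε _
  set c' : ℝ≥0∞ := phiRecession φ + (ε : ℝ≥0∞) / ENNReal.ofReal s with hc'
  have hc'lt : phiRecession φ < c' := by
    rw [hc']
    apply ENNReal.lt_add_right hrec
    simp [ENNReal.div_eq_zero_iff, hε.ne', hosT]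
  have hc'top : c' ≠ ⊤ := by
    rw [hc']
    exact ENNReal.add_ne_top.mpr ⟨hrec, (ENNReal.div_lt_top ENNReal.coe_ne_top hos0).ne⟩
  have hkey : φ (a + s) ≤ φ a + c' * ENNReal.ofReal s := by
    obtain ⟨c, hc1, hc2⟩ := exists_between hc'lt
    have hctop : c ≠ ⊤ := (hc2.trans_le le_top).ne
    have h1 : ∀ᶠ x in atTop, φ x / ENNReal.ofReal x < c :=
      eventually_lt_of_limsup_lt hc1
    have htend : Tendsto (fun x : ℝ => c.toReal * (s * (x / (x - a)))) atTop
        (𝓝 (c.toReal * (s * 1))) := by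
      apply Tendsto.const_mul
      apply Tendsto.const_mul
      have hsub : Tendsto (fun x : ℝ => x - a) atTop atTop :=
        tendsto_atTop_add_const_right _ (-a) tendsto_id
      have h0 : Tendsto (fun x : ℝ => a / (x - a)) atTop (𝓝 0) :=
        Tendsto.div_atTop tendsto_const_nhds hsub
      have heq : ∀ᶠ x : ℝ in atTop, 1 + a / (x - a) = x / (x - a) := by
        filter_upwards [eventually_gt_atTop a] with x hx
        have : x - a ≠ 0 := sub_ne_zero_of_ne hx.ne'
        field_simp
        ring
      have := (tendsto_const_nhds.add h0).congr' heq
      simpa using this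
    have hlt : c.toReal * (s * 1) < c'.toReal * s := by
      have : c.toReal < c'.toReal := ENNReal.toReal_strict_mono hc'top hc2
      have hc0 : 0 ≤ c.toReal := ENNReal.toReal_nonneg
      nlinarith
    have h2 : ∀ᶠ x : ℝ in atTop, c.toReal * (s * (x / (x - a))) ≤ c'.toReal * s :=
      htend.eventually (eventually_le_nhds hlt)
    have h3 : ∀ᶠ x : ℝ in atTop, a + s + 1 ≤ x := eventually_ge_atTop _
    obtain ⟨x, hx1, hx2, hx3⟩ := (h1.and (h2.and h3)).exists
    have hxa : 0 < x - a := by linarith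
    have hx0 : (0:ℝ) < x := by linarith
    set t := s / (x - a) with htdef
    have ht0 : 0 < t := div_pos hs' hxa
    have ht1 : t ≤ 1 := by
      rw [div_le_one hxa]; linarith
    have hcomb : t * x + (1 - t) * a = a + s := by
      have h : t * (x - a) = s := by rw [htdef]; exact div_mul_cancel₀ s hxa.ne'
      linear_combination h
    have hc := hconv x (mem_Ici.mpr hx0.le) a (mem_Ici.mpr ha) t ⟨ht0.le, ht1⟩
    rw [hcomb] at hc
    refine hc.trans ?_
    rw [add_comm (ENNReal.ofReal t * φ x)]
    refine add_le_add ?_ ?_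
    · calc ENNReal.ofReal (1 - t) * φ a ≤ 1 * φ a :=
          mul_le_mul_left (ENNReal.ofReal_le_one.mpr (by linarith)) _
        _ = φ a := one_mul _
    · have hφx : φ x ≤ c * ENNReal.ofReal x := by
        have := hx1
        rw [ENNReal.div_lt_iff (Or.inl (by simp [hx0])) (Or.inl ENNReal.ofReal_ne_top)] at this
        exact this.le
      calc ENNReal.ofReal t * φ x ≤ ENNReal.ofReal t * (c * ENNReal.ofReal x) :=
            mul_le_mul_right hφx _
        _ = c * ENNReal.ofReal (t * x) := by
            rw [ENNReal.ofReal_mul ht0.le]; ring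
        _ = c * ENNReal.ofReal (s * (x / (x - a))) := by
            congr 1
            rw [htdef]; ring
        _ = ENNReal.ofReal (c.toReal * (s * (x / (x - a)))) := by
            rw [ENNReal.ofReal_mul ENNReal.toReal_nonneg, ENNReal.ofReal_toReal hctop]
        _ ≤ ENNReal.ofReal (c'.toReal * s) := ENNReal.ofReal_le_ofReal hx2
        _ = c' * ENNReal.ofReal s := by
            rw [ENNReal.ofReal_mul ENNReal.toReal_nonneg, ENNReal.ofReal_toReal hc'top]
  refine hkey.trans ?_
  rw [hc', add_mul, ENNReal.div_mul_cancel hos0 hosT, ← add_assoc]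

lemma entropy_jensen {Z : Type*} [MeasurableSpace Z] {φ : ℝ → ℝ≥0∞}
    (hφ : IsEntropyFunction φ) (ν : Measure Z) [IsFiniteMeasure ν] (hν : ν ≠ 0)
    {g : Z → ℝ≥0∞} (hg : Measurable g) (hgfin : ∫⁻ z, g z ∂ν ≠ ∞) :
    ENNReal.ofReal (ν univ).toReal
      * φ ((∫⁻ z, g z ∂ν).toReal / (ν univ).toReal)
      ≤ ∫⁻ z, φ (g z).toReal ∂ν := by
  set mR : ℝ := (ν univ).toReal with hmR
  have hm0 : 0 < mR := ENNReal.toReal_pos (by simpa [Measure.measure_univ_eq_zero] using hν)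
    (measure_ne_top ν univ)
  set xb : ℝ := (∫⁻ z, g z ∂ν).toReal / mR with hxb
  have hxb0 : 0 ≤ xb := by positivity
  set I : ℝ≥0∞ := ∫⁻ z, φ (g z).toReal ∂ν with hI
  rcases eq_or_ne I ⊤ with hItop | hItop
  · rw [hItop]; exact le_top
  -- integrability facts
  have hgae : ∀ᵐ z ∂ν, g z < ∞ := ae_lt_top hg hgfin
  have hgint : Integrable (fun z => (g z).toReal) ν :=
    integrable_toReal_of_lintegral_ne_top hg.aemeasurable hgfin
  have hgintR : ∫ z, (g z).toReal ∂ν = (∫⁻ z, g z ∂ν).toReal :=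
    integral_toReal hg.aemeasurable hgae
  have hφmeas : Measurable fun z => φ (g z).toReal :=
    ((hφ.2.1.measurable).comp (hg.ennreal_toReal))
  have hφae : ∀ᵐ z ∂ν, φ (g z).toReal < ∞ := ae_lt_top hφmeas hItop
  have hxm : (∫⁻ z, g z ∂ν).toReal = xb * mR := by
    rw [hxb]; field_simp
  apply ENNReal.le_of_forall_nnreal_lt
  intro q hq
  set mE : ℝ≥0∞ := ENNReal.ofReal mR with hmE
  have hmE0 : mE ≠ 0 := by simp [hmE, hm0]
  have hmET : mE ≠ ∞ := ENNReal.ofReal_ne_top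
  have hqlt : (q : ℝ≥0∞) / mE < φ xb := by
    rw [ENNReal.div_lt_iff (Or.inl hmE0) (Or.inl hmET)]
    exact hq.trans_eq (mul_comm _ _)
  set r : ℝ := ((q : ℝ≥0∞) / mE).toReal with hrdef
  have hrfin : (q : ℝ≥0∞) / mE ≠ ∞ := (ENNReal.div_lt_top ENNReal.coe_ne_top hmE0).ne
  have hor : ENNReal.ofReal r = (q : ℝ≥0∞) / mE := ENNReal.ofReal_toReal hrfin
  have hrlt : ENNReal.ofReal r < φ xb := hor ▸ hqlt
  have hqeq : (q : ℝ≥0∞) = mE * ENNReal.ofReal r := by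
    rw [hor, ENNReal.mul_div_cancel hmE0 hmET]
  obtain ⟨a, b, u, hb0, hpt, hsep⟩ := entropy_separation hφ hxb0 hrlt
  rcases hb0.eq_or_lt with hb | hb
  · -- vertical separation: contradiction with I < ∞
    exfalso
    have hae : ∀ᵐ z ∂ν, u < a * (g z).toReal := by
      filter_upwards [hφae] with z hz
      have := hsep ((g z).toReal) ((φ (g z).toReal).toReal) ENNReal.toReal_nonneg
        ENNReal.toReal_nonneg (by rw [ENNReal.ofReal_toReal hz.ne])
      rw [← hb] at this
      simpa using this
    have hint : ∫ z, u ∂ν ≤ ∫ z, a * (g z).toReal ∂ν := by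
      apply integral_mono_ae (integrable_const u) (hgint.const_mul a)
      filter_upwards [hae] with z hz using hz.le
    rw [integral_const, measureReal_def, ← hmR, integral_const_mul, hgintR, smul_eq_mul, hxm] at hint
    have : a * xb < u := by simpa [← hb] using hpt
    nlinarith
  · -- b > 0 : affine minorant
    set f : Z → ℝ := fun z => (u - a * (g z).toReal) / b with hfdef
    have hfint : Integrable f ν := by
      apply Integrable.div_const
      exact (integrable_const u).sub (hgint.const_mul a)
    have hminor : ∀ z, ENNReal.ofReal (f z) ≤ φ (g z).toReal := by
      intro z
      rcases eq_or_ne (φ (g z).toReal) ⊤ with h | h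
      · simp [h]
      · have := hsep ((g z).toReal) ((φ (g z).toReal).toReal) ENNReal.toReal_nonneg
          ENNReal.toReal_nonneg (by rw [ENNReal.ofReal_toReal h])
        have hfz : f z ≤ (φ (g z).toReal).toReal := by
          rw [hfdef, div_le_iff₀ hb]
          nlinarith
        calc ENNReal.ofReal (f z) ≤ ENNReal.ofReal ((φ (g z).toReal).toReal) :=
              ENNReal.ofReal_le_ofReal hfz
          _ = φ (g z).toReal := ENNReal.ofReal_toReal h
    have hIlow : ENNReal.ofReal (∫ z, f z ∂ν) ≤ I := by
      calc ENNReal.ofReal (∫ z, f z ∂ν) ≤ ENNReal.ofReal (∫ z, max (f z) 0 ∂ν) := by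
            apply ENNReal.ofReal_le_ofReal
            apply integral_mono hfint (hfint.sup (integrable_const 0))
            intro z; exact le_max_left _ _
        _ = ∫⁻ z, ENNReal.ofReal (max (f z) 0) ∂ν := by
            apply ofReal_integral_eq_lintegral_ofReal (hfint.sup (integrable_const 0))
            exact Filter.Eventually.of_forall fun z => le_max_right _ _
        _ = ∫⁻ z, ENNReal.ofReal (f z) ∂ν := by
            congr 1; funext z
            rcases le_total 0 (f z) with h | h
            · rw [sup_eq_left.mpr h]
            · rw [sup_eq_right.mpr h]
              simp [ENNReal.ofReal_eq_zero.mpr h]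
        _ ≤ I := lintegral_mono hminor
    have hintf : ∫ z, f z ∂ν = (u - a * xb) * mR / b := by
      simp only [hfdef]
      rw [integral_div, integral_sub (integrable_const u) (hgint.const_mul a),
        integral_const, measureReal_def, ← hmR, integral_const_mul, hgintR, hxm, smul_eq_mul]
      ring
    have hler : mR * r ≤ ∫ z, f z ∂ν := by
      rw [hintf, le_div_iff₀ hb]
      have hr0 : 0 ≤ r := ENNReal.toReal_nonneg
      nlinarith [hpt, hm0.le]
    calc (q : ℝ≥0∞) = ENNReal.ofReal (mR * r) := by
          rw [hqeq, hmE, ← ENNReal.ofReal_mul hm0.le]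
      _ ≤ ENNReal.ofReal (∫ z, f z ∂ν) := ENNReal.ofReal_le_ofReal hler
      _ ≤ I := hIlow

lemma entropy_superlinear {φ : ℝ → ℝ≥0∞} (hφ : IsEntropyFunction φ)
    (hrec : phiRecession φ = ⊤) (M : ℝ) (hM : 0 ≤ M) :
    ∃ x₁ : ℝ, 2 ≤ x₁ ∧ ∀ x, x₁ ≤ x → ENNReal.ofReal (M * (x - 1)) ≤ φ x := by
  obtain ⟨hφ1, hlsc, hconv⟩ := hφ
  have hfreq : ∃ᶠ x : ℝ in atTop, ENNReal.ofReal M < φ x / ENNReal.ofReal x := by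
    refine frequently_lt_of_lt_limsup (by isBoundedDefault) ?_
    rw [show Filter.limsup (fun x : ℝ => φ x / ENNReal.ofReal x) Filter.atTop
      = phiRecession φ from rfl, hrec]
    exact ENNReal.ofReal_lt_top
  obtain ⟨x₁, hM₁, hx₁⟩ := (hfreq.and_eventually (eventually_ge_atTop 2)).exists
  have hx₁0 : (0:ℝ) < x₁ := by linarith
  have hox₁0 : ENNReal.ofReal x₁ ≠ 0 := by simp [hx₁0]
  have hMx₁ : ENNReal.ofReal M * ENNReal.ofReal x₁ ≤ φ x₁ := by
    calc ENNReal.ofReal M * ENNReal.ofReal x₁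
        ≤ (φ x₁ / ENNReal.ofReal x₁) * ENNReal.ofReal x₁ := mul_le_mul_left hM₁.le _
      _ = φ x₁ := ENNReal.div_mul_cancel hox₁0 ENNReal.ofReal_ne_top
  refine ⟨x₁, hx₁, ?_⟩
  intro x hx
  have hx1 : (1:ℝ) < x := by linarith
  have hx1' : (0:ℝ) < x - 1 := by linarith
  set t := (x₁ - 1) / (x - 1) with htdef
  have ht0 : 0 < t := div_pos (by linarith) hx1'
  have ht1 : t ≤ 1 := by rw [div_le_one hx1']; linarith
  have hot0 : ENNReal.ofReal t ≠ 0 := by simp [ht0]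
  have hcomb : t * x + (1 - t) * 1 = x₁ := by
    have h : t * (x - 1) = x₁ - 1 := by rw [htdef]; exact div_mul_cancel₀ _ hx1'.ne'
    linear_combination h
  have hc := hconv x (mem_Ici.mpr (by linarith)) 1 (mem_Ici.mpr zero_le_one) t ⟨ht0.le, ht1⟩
  rw [hcomb, hφ1, mul_zero, add_zero] at hc
  rw [← ENNReal.mul_le_mul_iff_left hot0 ENNReal.ofReal_ne_top]
  calc ENNReal.ofReal (M * (x - 1)) * ENNReal.ofReal t
      = ENNReal.ofReal (M * (x₁ - 1)) := by
        rw [← ENNReal.ofReal_mul (by positivity)]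
        congr 1
        rw [htdef]
        field_simp
    _ ≤ ENNReal.ofReal (M * x₁) := ENNReal.ofReal_le_ofReal (by nlinarith)
    _ = ENNReal.ofReal M * ENNReal.ofReal x₁ := ENNReal.ofReal_mul hM
    _ ≤ φ x₁ := hMx₁
    _ ≤ ENNReal.ofReal t * φ x := hc
    _ = φ x * ENNReal.ofReal t := mul_comm _ _

lemma phiDiv_lower {Z : Type*} [MeasurableSpace Z] {φ : ℝ → ℝ≥0∞}
    (hφ : IsEntropyFunction φ) (μ ν : Measure Z) [IsFiniteMeasure μ] [IsFiniteMeasure ν]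
    (hν : ν ≠ 0) :
    ENNReal.ofReal (ν univ).toReal * φ ((μ univ).toReal / (ν univ).toReal)
      ≤ phiDiv φ μ ν := by
  set I : ℝ≥0∞ := ∫⁻ z, μ.rnDeriv ν z ∂ν with hIdef
  set s : ℝ≥0∞ := μ.singularPart ν univ with hsdef
  have hIfin : I ≠ ∞ := ((Measure.lintegral_rnDeriv_le).trans_lt (measure_lt_top μ univ)).ne
  have hsfin : s ≠ ∞ := measure_ne_top _ _
  have hIs : s + I = μ univ := by
    have h := Measure.singularPart_add_rnDeriv μ ν
    have := congrArg (fun m : Measure Z => m univ) h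
    simpa [Measure.add_apply, withDensity_apply _ MeasurableSet.univ] using this
  set mR : ℝ := (ν univ).toReal with hmR
  have hm0 : 0 < mR := ENNReal.toReal_pos (by simpa [Measure.measure_univ_eq_zero] using hν)
    (measure_ne_top ν univ)
  have htot : (μ univ).toReal = I.toReal + s.toReal := by
    rw [← hIs, ENNReal.toReal_add hsfin hIfin]
    ring
  have hsplit : (μ univ).toReal / mR = I.toReal / mR + s.toReal / mR := by
    rw [htot, add_div]
  have hrec := entropy_recession_bound hφ (a := I.toReal / mR) (s := s.toReal / mR)
    (by positivity) (by positivity)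
  have hcancel : ENNReal.ofReal mR * ENNReal.ofReal (s.toReal / mR) = s := by
    rw [← ENNReal.ofReal_mul hm0.le, mul_div_cancel₀ _ hm0.ne', ENNReal.ofReal_toReal hsfin]
  calc ENNReal.ofReal mR * φ ((μ univ).toReal / mR)
      = ENNReal.ofReal mR * φ (I.toReal / mR + s.toReal / mR) := by rw [hsplit]
    _ ≤ ENNReal.ofReal mR * (φ (I.toReal / mR) + phiRecession φ * ENNReal.ofReal (s.toReal / mR)) :=
        mul_le_mul_right hrec _
    _ = ENNReal.ofReal mR * φ (I.toReal / mR)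
        + phiRecession φ * (ENNReal.ofReal mR * ENNReal.ofReal (s.toReal / mR)) := by ring
    _ = ENNReal.ofReal mR * φ (I.toReal / mR) + phiRecession φ * s := by rw [hcancel]
    _ ≤ (∫⁻ z, φ ((μ.rnDeriv ν z).toReal) ∂ν) + phiRecession φ * s := by
        refine add_le_add ?_ le_rfl
        exact entropy_jensen hφ ν hν (Measure.measurable_rnDeriv μ ν) hIfin
    _ = phiDiv φ μ ν := rfl

/-- **Mass–coercivity lower bound.** For compact metric spaces `X`, `Y`, nonzero finite
measures `α`, `β`, entropy functions `φ₁, φ₂` and a continuous cost `c ≥ L`, every finite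
positive measure `π` on `X×Y` satisfies
`∫ c dπ + D_{φ₁}(π₁‖α) + D_{φ₂}(π₂‖β) ≥ L·m(π) + m(α)·φ₁(m(π)/m(α)) + m(β)·φ₂(m(π)/m(β))`;
and if `φ₁, φ₂` are superlinear, the objective tends to `+∞` as `m(π) → ∞`, uniformly over
continuous costs `c` bounded below by `L`. -/
theorem stmt1
    {X Y : Type*} [MetricSpace X] [CompactSpace X] [MeasurableSpace X] [BorelSpace X]
    [MetricSpace Y] [CompactSpace Y] [MeasurableSpace Y] [BorelSpace Y]
    (α : Measure X) (β : Measure Y) [IsFiniteMeasure α] [IsFiniteMeasure β]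
    (hα : α ≠ 0) (hβ : β ≠ 0)
    (φ₁ φ₂ : ℝ → ℝ≥0∞)
    (hφ₁ : IsEntropyFunction φ₁) (hφ₂ : IsEntropyFunction φ₂)
    (L : ℝ) :
    (∀ (c : X × Y → ℝ), Continuous c → (∀ z, L ≤ c z) →
      ∀ (π : Measure (X × Y)), IsFiniteMeasure π →
        ((L * (π Set.univ).toReal : ℝ) : EReal)
          + ((ENNReal.ofReal (α Set.univ).toReal
              * φ₁ ((π Set.univ).toReal / (α Set.univ).toReal) : ℝ≥0∞) : EReal)
          + ((ENNReal.ofReal (β Set.univ).toReal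
              * φ₂ ((π Set.univ).toReal / (β Set.univ).toReal) : ℝ≥0∞) : EReal)
        ≤ UOTobj α β φ₁ φ₂ c π) ∧
    (phiRecession φ₁ = ⊤ → phiRecession φ₂ = ⊤ →
      ∀ A : ℝ, ∃ K : ℝ, ∀ (π : Measure (X × Y)), IsFiniteMeasure π →
        K ≤ (π Set.univ).toReal →
        ∀ (c : X × Y → ℝ), Continuous c → (∀ z, L ≤ c z) →
          (A : EReal) ≤ UOTobj α β φ₁ φ₂ c π) := by
  have hmain : ∀ (c : X × Y → ℝ), Continuous c → (∀ z, L ≤ c z) →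
      ∀ (π : Measure (X × Y)), IsFiniteMeasure π →
        ((L * (π Set.univ).toReal : ℝ) : EReal)
          + ((ENNReal.ofReal (α Set.univ).toReal
              * φ₁ ((π Set.univ).toReal / (α Set.univ).toReal) : ℝ≥0∞) : EReal)
          + ((ENNReal.ofReal (β Set.univ).toReal
              * φ₂ ((π Set.univ).toReal / (β Set.univ).toReal) : ℝ≥0∞) : EReal)
        ≤ UOTobj α β φ₁ φ₂ c π := by
    intro c hc hcL π hπ
    haveI := hπ
    have hmar1 : (π.map Prod.fst) univ = π univ := by
      rw [Measure.map_apply measurable_fst MeasurableSet.univ, preimage_univ]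
    have hmar2 : (π.map Prod.snd) univ = π univ := by
      rw [Measure.map_apply measurable_snd MeasurableSet.univ, preimage_univ]
    -- integral bound
    have hint : Integrable c π := by
      rw [← integrableOn_univ]
      exact (hc.continuousOn).integrableOn_compact isCompact_univ
    have hLc : L * (π univ).toReal ≤ ∫ z, c z ∂π := by
      have h := integral_mono (integrable_const L) hint (fun z => hcL z)
      rwa [integral_const, smul_eq_mul, mul_comm] at h
    have h2 : (ENNReal.ofReal (α univ).toReal
        * φ₁ ((π univ).toReal / (α univ).toReal) : ℝ≥0∞)
        ≤ phiDiv φ₁ (π.map Prod.fst) α := by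
      have := phiDiv_lower hφ₁ (π.map Prod.fst) α hα
      rwa [hmar1] at this
    have h3 : (ENNReal.ofReal (β univ).toReal
        * φ₂ ((π univ).toReal / (β univ).toReal) : ℝ≥0∞)
        ≤ phiDiv φ₂ (π.map Prod.snd) β := by
      have := phiDiv_lower hφ₂ (π.map Prod.snd) β hβ
      rwa [hmar2] at this
    unfold UOTobj
    refine add_le_add (add_le_add ?_ ?_) ?_
    · exact EReal.coe_le_coe_iff.mpr hLc
    · exact EReal.coe_ennreal_le_coe_ennreal_iff.mpr h2
    · exact EReal.coe_ennreal_le_coe_ennreal_iff.mpr h3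
  refine ⟨hmain, ?_⟩
  intro h1top _ A
  set mα : ℝ := (α univ).toReal with hmα
  have hmα0 : 0 < mα := ENNReal.toReal_pos (by simpa [Measure.measure_univ_eq_zero] using hα)
    (measure_ne_top α univ)
  set M : ℝ := max 0 (1 - L) with hM
  have hM0 : 0 ≤ M := le_max_left _ _
  have hLM : 1 ≤ L + M := by
    rcases le_total (1 - L) 0 with h | h
    · rw [hM, max_eq_left h]; linarith
    · rw [hM, max_eq_right h]; linarith
  obtain ⟨x₁, hx₁2, hx₁⟩ := entropy_superlinear hφ₁ h1top M hM0
  refine ⟨max (A + M * mα) (x₁ * mα), ?_⟩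
  intro π hπ hK c hc hcL
  haveI := hπ
  set m : ℝ := (π univ).toReal with hm
  have hm0 : 0 ≤ m := ENNReal.toReal_nonneg
  have hmK1 : A + M * mα ≤ m := le_trans (le_max_left _ _) hK
  have hmK2 : x₁ * mα ≤ m := le_trans (le_max_right _ _) hK
  have hxarg : x₁ ≤ m / mα := by
    rw [le_div_iff₀ hmα0]; exact hmK2
  have hT1 : ENNReal.ofReal (M * m - M * mα)
      ≤ ENNReal.ofReal mα * φ₁ (m / mα) := by
    calc ENNReal.ofReal (M * m - M * mα)
        = ENNReal.ofReal (mα * (M * (m / mα - 1))) := by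
          congr 1
          field_simp
      _ = ENNReal.ofReal mα * ENNReal.ofReal (M * (m / mα - 1)) :=
          ENNReal.ofReal_mul hmα0.le
      _ ≤ ENNReal.ofReal mα * φ₁ (m / mα) :=
          mul_le_mul_right (hx₁ _ hxarg) _
  have hstep : (A : EReal) ≤ ((L * m : ℝ) : EReal)
      + ((ENNReal.ofReal mα * φ₁ (m / mα) : ℝ≥0∞) : EReal)
      + ((ENNReal.ofReal (β univ).toReal
          * φ₂ (m / (β univ).toReal) : ℝ≥0∞) : EReal) := by
    have hreal : A ≤ L * m + (M * m - M * mα) := by nlinarith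
    calc (A : EReal) ≤ ((L * m + (M * m - M * mα) : ℝ) : EReal) :=
          EReal.coe_le_coe_iff.mpr hreal
      _ = ((L * m : ℝ) : EReal) + ((M * m - M * mα : ℝ) : EReal) := by
          rw [← EReal.coe_add]
      _ ≤ ((L * m : ℝ) : EReal)
          + ((ENNReal.ofReal mα * φ₁ (m / mα) : ℝ≥0∞) : EReal) := by
          refine add_le_add le_rfl ?_
          calc ((M * m - M * mα : ℝ) : EReal)
              ≤ ((ENNReal.ofReal (M * m - M * mα) : ℝ≥0∞) : EReal) := by
                rw [EReal.coe_ennreal_ofReal]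
                exact le_max_left ((M * m - M * mα : ℝ) : EReal) 0
            _ ≤ _ := EReal.coe_ennreal_le_coe_ennreal_iff.mpr hT1
      _ ≤ _ := le_add_of_nonneg_right (EReal.coe_ennreal_nonneg _)
  exact hstep.trans (hmain c hc hcL π hπ)
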